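/- Any polynomial g ∈ ℝ[x,y,z] of degree n ≥ 3 satisfying (x(y-1) - βz)∂g/∂x + (α(1-x²) - κy)∂g/∂y + (x - λz)∂g/∂z = β₀ + β₁x + β₂y + β₃z (with α ≠ 0 and β₀,…,β₃ ∈ ℝ) does not exist; equivalently, every polynomial solution g of this equation has degree at most 2. -/

import Mathlib

open MvPolynomial

set_option linter.unusedSectionVars false
set_option linter.unusedVariables false
set_option maxHeartbeats 1000000

namespace Stmt10

lemma coeff_pderiv {σ R : Type*} [CommSemiring R] [DecidableEq σ] (i : σ) (m : σ →₀ ℕ)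
    (p : MvPolynomial σ R) :
    coeff m (pderiv i p) = (m i + 1 : ℕ) * coeff (m + Finsupp.single i 1) p := by

  induction p using MvPolynomial.induction_on' with
  | add p q hp hq => simp [hp, hq, mul_add]
  | monomial u a =>
    rw [pderiv_monomial]
    rcases Nat.eq_zero_or_pos (u i) with h0 | hpos
    · have : u - Finsupp.single i 1 = u := by
        ext j
        rcases eq_or_ne j i with rfl | hji
        · simp [h0, Finsupp.tsub_apply]
        · simp [Finsupp.tsub_apply, Finsupp.single_apply, Ne.symm hji]
      rw [this]
      simp only [coeff_monomial]
      have hne : u ≠ m + Finsupp.single i 1 := by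
        intro he
        have := congrArg (fun f => f i) he
        simp [h0] at this
      rw [if_neg hne]
      split_ifs with h
      · subst h; simp [h0]
      · simp
    · simp only [coeff_monomial]
      have hiff : u - Finsupp.single i 1 = m ↔ u = m + Finsupp.single i 1 := by
        constructor
        · intro h; ext j
          have := congrArg (fun f => f j) h
          simp only [Finsupp.tsub_apply, Finsupp.coe_add, Pi.add_apply] at this ⊢
          rcases eq_or_ne j i with rfl | hji
          · simp only [Finsupp.single_apply, if_pos rfl, if_true] at this ⊢
            omega
          · simp only [Finsupp.single_apply, if_neg (Ne.symm hji)] at this ⊢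
            omega
        · intro h; subst h; ext j
          simp only [Finsupp.tsub_apply, Finsupp.coe_add, Pi.add_apply]
          rcases eq_or_ne j i with rfl | hji
          · simp [Finsupp.single_apply]
          · simp [Finsupp.single_apply, Ne.symm hji]
      by_cases h : u = m + Finsupp.single i 1
      · rw [if_pos (hiff.mpr h), if_pos h]
        have : u i = m i + 1 := by
          subst h; simp [Finsupp.single_apply]
        rw [this]; push_cast; ring
      · rw [if_neg (fun hh => h (hiff.mp hh)), if_neg h, mul_zero]

/-- the exponent vector x^a y^b z^c -/
noncomputable def mu (a b c : ℕ) : Fin 3 →₀ ℕ :=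
  Finsupp.single 0 a + Finsupp.single 1 b + Finsupp.single 2 c

lemma mu_apply0 (a b c : ℕ) : mu a b c 0 = a := by
  simp [mu, Finsupp.single_apply]
lemma mu_apply1 (a b c : ℕ) : mu a b c 1 = b := by
  simp [mu, Finsupp.single_apply]
lemma mu_apply2 (a b c : ℕ) : mu a b c 2 = c := by
  simp [mu, Finsupp.single_apply]

lemma eq_mu (m : Fin 3 →₀ ℕ) : m = mu (m 0) (m 1) (m 2) := by
  ext j
  fin_cases j
  · simp [mu_apply0]
  · simp [mu_apply1]
  · simp [mu_apply2]

lemma mu_eq_mu_iff {a b c a' b' c' : ℕ} : mu a b c = mu a' b' c' ↔ a = a' ∧ b = b' ∧ c = c' := by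
  constructor
  · intro h
    refine ⟨?_, ?_, ?_⟩
    · have := congrArg (fun f => f 0) h; simpa [mu_apply0] using this
    · have := congrArg (fun f => f 1) h; simpa [mu_apply1] using this
    · have := congrArg (fun f => f 2) h; simpa [mu_apply2] using this
  · rintro ⟨rfl, rfl, rfl⟩; rfl

lemma mu_succ0 (a b c : ℕ) : mu (a + 1) b c = Finsupp.single 0 1 + mu a b c := by
  ext j
  fin_cases j
  · simp [mu_apply0, Finsupp.single_apply, Nat.add_comm]
  · simp [mu_apply1, Finsupp.single_apply, Nat.add_comm]
  · simp [mu_apply2, Finsupp.single_apply, Nat.add_comm]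

lemma mu_succ1 (a b c : ℕ) : mu a (b + 1) c = Finsupp.single 1 1 + mu a b c := by
  ext j
  fin_cases j
  · simp [mu_apply0, Finsupp.single_apply, Nat.add_comm]
  · simp [mu_apply1, Finsupp.single_apply, Nat.add_comm]
  · simp [mu_apply2, Finsupp.single_apply, Nat.add_comm]

lemma mu_succ2 (a b c : ℕ) : mu a b (c + 1) = Finsupp.single 2 1 + mu a b c := by
  ext j
  fin_cases j
  · simp [mu_apply0, Finsupp.single_apply, Nat.add_comm]
  · simp [mu_apply1, Finsupp.single_apply, Nat.add_comm]
  · simp [mu_apply2, Finsupp.single_apply, Nat.add_comm]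

lemma mu_zero : mu 0 0 0 = 0 := by
  ext j; fin_cases j <;> simp [mu_apply0, mu_apply1, mu_apply2]

lemma mu_sum (a b c : ℕ) : (mu a b c).sum (fun _ e => e) = a + b + c := by
  rw [Finsupp.sum_fintype]
  · rw [Fin.sum_univ_three]
    simp [mu_apply0, mu_apply1, mu_apply2]
  · intro x; rfl

/-- coeff of X i * p at mu with zero exponent in i is zero -/
lemma coeff_X0_mul_zero (b c : ℕ) (p : MvPolynomial (Fin 3) ℝ) :
    coeff (mu 0 b c) (X 0 * p) = 0 := by
  rw [coeff_X_mul']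
  rw [if_neg]
  simp [Finsupp.mem_support_iff, mu_apply0]

lemma coeff_X0_mul (a b c : ℕ) (p : MvPolynomial (Fin 3) ℝ) :
    coeff (mu (a+1) b c) (X 0 * p) = coeff (mu a b c) p := by
  rw [mu_succ0, coeff_X_mul]

lemma coeff_X1_mul_zero (a c : ℕ) (p : MvPolynomial (Fin 3) ℝ) :
    coeff (mu a 0 c) (X 1 * p) = 0 := by
  rw [coeff_X_mul', if_neg]
  simp [Finsupp.mem_support_iff, mu_apply1]

lemma coeff_X1_mul (a b c : ℕ) (p : MvPolynomial (Fin 3) ℝ) :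
    coeff (mu a (b+1) c) (X 1 * p) = coeff (mu a b c) p := by
  rw [mu_succ1, coeff_X_mul]

lemma coeff_X2_mul_zero (a b : ℕ) (p : MvPolynomial (Fin 3) ℝ) :
    coeff (mu a b 0) (X 2 * p) = 0 := by
  rw [coeff_X_mul', if_neg]
  simp [Finsupp.mem_support_iff, mu_apply2]

lemma coeff_X2_mul (a b c : ℕ) (p : MvPolynomial (Fin 3) ℝ) :
    coeff (mu a b (c+1)) (X 2 * p) = coeff (mu a b c) p := by
  rw [mu_succ2, coeff_X_mul]


noncomputable def tt (g : MvPolynomial (Fin 3) ℝ) (a b c : ℤ) : ℝ :=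
  if 0 ≤ a ∧ 0 ≤ b ∧ 0 ≤ c then coeff (mu a.toNat b.toNat c.toNat) g else 0

variable (g : MvPolynomial (Fin 3) ℝ)

lemma tt_nat (a b c : ℕ) : tt g a b c = coeff (mu a b c) g := by
  simp [tt]

lemma tt_neg {a b c : ℤ} (h : a < 0 ∨ b < 0 ∨ c < 0) : tt g a b c = 0 := by
  rw [tt, if_neg]; omega

lemma coeff_pd0 (a b c : ℕ) :
    coeff (mu a b c) (pderiv 0 g) = ((a:ℝ)+1) * coeff (mu (a+1) b c) g := by
  rw [coeff_pderiv, mu_apply0, add_comm (mu a b c), ← mu_succ0]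
  push_cast; ring

lemma coeff_pd1 (a b c : ℕ) :
    coeff (mu a b c) (pderiv 1 g) = ((b:ℝ)+1) * coeff (mu a (b+1) c) g := by
  rw [coeff_pderiv, mu_apply1, add_comm (mu a b c), ← mu_succ1]
  push_cast; ring

lemma coeff_pd2 (a b c : ℕ) :
    coeff (mu a b c) (pderiv 2 g) = ((c:ℝ)+1) * coeff (mu a b (c+1)) g := by
  rw [coeff_pderiv, mu_apply2, add_comm (mu a b c), ← mu_succ2]
  push_cast; ring


lemma termA (a b c : ℕ) :
    coeff (mu a b c) (X 0 * (X 1 * pderiv 0 g)) = (a:ℝ) * tt g a ((b:ℤ)-1) c := by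
  obtain _ | a := a
  · rw [coeff_X0_mul_zero]; simp
  · rw [coeff_X0_mul]
    obtain _ | b := b
    · rw [coeff_X1_mul_zero]
      simp only [tt]
      rw [if_neg (by omega)]
      ring
    · rw [coeff_X1_mul, coeff_pd0, ← tt_nat g]
      push_cast
      ring

lemma termB (a b c : ℕ) :
    coeff (mu a b c) (X 0 * pderiv 0 g) = (a:ℝ) * tt g a b c := by
  obtain _ | a := a
  · rw [coeff_X0_mul_zero]; simp
  · rw [coeff_X0_mul, coeff_pd0, ← tt_nat g]
    push_cast; ring

lemma termC (a b c : ℕ) :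
    coeff (mu a b c) (X 2 * pderiv 0 g) = ((a:ℝ)+1) * tt g (a+1) b ((c:ℤ)-1) := by
  obtain _ | c := c
  · rw [coeff_X2_mul_zero]
    simp only [tt]
    rw [if_neg (by omega)]
    ring
  · rw [coeff_X2_mul, coeff_pd0, ← tt_nat g]
    push_cast; ring
lemma termD (a b c : ℕ) :
    coeff (mu a b c) (pderiv 1 g) = ((b:ℝ)+1) * tt g a (b+1) c := by
  rw [coeff_pd1, ← tt_nat g]; push_cast; ring
lemma termE (a b c : ℕ) :
    coeff (mu a b c) (X 0 * (X 0 * pderiv 1 g)) = ((b:ℝ)+1) * tt g ((a:ℤ)-2) (b+1) c := by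
  obtain _ | a := a
  · rw [coeff_X0_mul_zero]
    simp only [tt]
    rw [if_neg (by omega)]
    ring
  · rw [coeff_X0_mul]
    obtain _ | a := a
    · rw [coeff_X0_mul_zero]
      simp only [tt]
      rw [if_neg (by omega)]
      ring
    · rw [coeff_X0_mul, coeff_pd1, ← tt_nat g]
      push_cast; ring
lemma termF (a b c : ℕ) :
    coeff (mu a b c) (X 1 * pderiv 1 g) = (b:ℝ) * tt g a b c := by
  obtain _ | b := b
  · rw [coeff_X1_mul_zero]; simp
  · rw [coeff_X1_mul, coeff_pd1, ← tt_nat g]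
    push_cast; ring
lemma termG (a b c : ℕ) :
    coeff (mu a b c) (X 0 * pderiv 2 g) = ((c:ℝ)+1) * tt g ((a:ℤ)-1) b (c+1) := by
  obtain _ | a := a
  · rw [coeff_X0_mul_zero]
    simp only [tt]
    rw [if_neg (by omega)]
    ring
  · rw [coeff_X0_mul, coeff_pd2, ← tt_nat g]
    push_cast; ring
lemma termH (a b c : ℕ) :
    coeff (mu a b c) (X 2 * pderiv 2 g) = (c:ℝ) * tt g a b c := by
  obtain _ | c := c
  · rw [coeff_X2_mul_zero]; simp
  · rw [coeff_X2_mul, coeff_pd2, ← tt_nat g]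
    push_cast; ring


lemma single_eq_mu_100 : Finsupp.single (0 : Fin 3) 1 = mu 1 0 0 := by
  simp [mu]
lemma single_eq_mu_010 : Finsupp.single (1 : Fin 3) 1 = mu 0 1 0 := by
  simp [mu]
lemma single_eq_mu_001 : Finsupp.single (2 : Fin 3) 1 = mu 0 0 1 := by
  simp [mu]

lemma coeff_rhs (β₀ β₁ β₂ β₃ : ℝ) (a b c : ℕ) :
    coeff (mu a b c) (C β₀ + C β₁ * X 0 + C β₂ * X 1 + C β₃ * X 2 : MvPolynomial (Fin 3) ℝ)
    = (if a = 0 ∧ b = 0 ∧ c = 0 then β₀ else 0)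
      + (if a = 1 ∧ b = 0 ∧ c = 0 then β₁ else 0)
      + (if a = 0 ∧ b = 1 ∧ c = 0 then β₂ else 0)
      + (if a = 0 ∧ b = 0 ∧ c = 1 then β₃ else 0) := by
  rw [coeff_add, coeff_add, coeff_add, coeff_C, coeff_C_mul, coeff_C_mul, coeff_C_mul,
    coeff_X', coeff_X', coeff_X', single_eq_mu_100, single_eq_mu_010, single_eq_mu_001,
    ← mu_zero]
  simp only [mu_eq_mu_iff]
  have : ∀ (r : ℝ) (p : Prop) [Decidable p], r * (if p then (1:ℝ) else 0) = if p then r else 0 := by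
    intro r p _; split_ifs <;> simp
  rw [this, this, this]
  simp only [eq_comm]


noncomputable def rhs (β₀ β₁ β₂ β₃ : ℝ) (a b c : ℤ) : ℝ :=
  (if a = 0 ∧ b = 0 ∧ c = 0 then β₀ else 0)
  + (if a = 1 ∧ b = 0 ∧ c = 0 then β₁ else 0)
  + (if a = 0 ∧ b = 1 ∧ c = 0 then β₂ else 0)
  + (if a = 0 ∧ b = 0 ∧ c = 1 then β₃ else 0)

lemma rhs_def (β₀ β₁ β₂ β₃ : ℝ) (a b c : ℤ) : rhs β₀ β₁ β₂ β₃ a b c =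
  (if a = 0 ∧ b = 0 ∧ c = 0 then β₀ else 0)
  + (if a = 1 ∧ b = 0 ∧ c = 0 then β₁ else 0)
  + (if a = 0 ∧ b = 1 ∧ c = 0 then β₂ else 0)
  + (if a = 0 ∧ b = 0 ∧ c = 1 then β₃ else 0) := rfl

lemma rhs_eq_zero {β₀ β₁ β₂ β₃ : ℝ} {a b c : ℤ}
    (h1 : ¬(a = 0 ∧ b = 0 ∧ c = 0)) (h2 : ¬(a = 1 ∧ b = 0 ∧ c = 0))
    (h3 : ¬(a = 0 ∧ b = 1 ∧ c = 0)) (h4 : ¬(a = 0 ∧ b = 0 ∧ c = 1)) :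
    rhs β₀ β₁ β₂ β₃ a b c = 0 := by
  rw [rhs, if_neg h1, if_neg h2, if_neg h3, if_neg h4]; norm_num

/-- the master recurrence, over ℤ. -/
theorem master (α β κ lam β₀ β₁ β₂ β₃ : ℝ)
    (heq : (X 0 * (X 1 - 1) - C β * X 2) * pderiv 0 g
      + (C α * (1 - X 0 ^ 2) - C κ * X 1) * pderiv 1 g
      + (X 0 - C lam * X 2) * pderiv 2 g
      = C β₀ + C β₁ * X 0 + C β₂ * X 1 + C β₃ * X 2) :
    ∀ a b c : ℤ,
      (a:ℝ) * tt g a (b-1) c - ((a:ℝ) + κ*(b:ℝ) + lam*(c:ℝ)) * tt g a b c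
        - β*((a:ℝ)+1) * tt g (a+1) b (c-1)
        + α*((b:ℝ)+1) * tt g a (b+1) c - α*((b:ℝ)+1) * tt g (a-2) (b+1) c
        + ((c:ℝ)+1) * tt g (a-1) b (c+1)
      = (if a = 0 ∧ b = 0 ∧ c = 0 then β₀ else 0)
        + (if a = 1 ∧ b = 0 ∧ c = 0 then β₁ else 0)
        + (if a = 0 ∧ b = 1 ∧ c = 0 then β₂ else 0)
        + (if a = 0 ∧ b = 0 ∧ c = 1 then β₃ else 0) := by
  have hexp : X 0 * (X 1 * pderiv 0 g) - X 0 * pderiv 0 g - C β * (X 2 * pderiv 0 g)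
      + C α * pderiv 1 g - C α * (X 0 * (X 0 * pderiv 1 g)) - C κ * (X 1 * pderiv 1 g)
      + X 0 * pderiv 2 g - C lam * (X 2 * pderiv 2 g)
      = C β₀ + C β₁ * X 0 + C β₂ * X 1 + C β₃ * X 2 := by
    rw [← heq]; ring
  -- natural-number master
  have hnat : ∀ a b c : ℕ,
      (a:ℝ) * tt g a ((b:ℤ)-1) c - ((a:ℝ) + κ*(b:ℝ) + lam*(c:ℝ)) * tt g a b c
        - β*((a:ℝ)+1) * tt g ((a:ℤ)+1) b ((c:ℤ)-1)
        + α*((b:ℝ)+1) * tt g a ((b:ℤ)+1) c - α*((b:ℝ)+1) * tt g ((a:ℤ)-2) ((b:ℤ)+1) c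
        + ((c:ℝ)+1) * tt g ((a:ℤ)-1) b ((c:ℤ)+1)
      = (if a = 0 ∧ b = 0 ∧ c = 0 then β₀ else 0)
        + (if a = 1 ∧ b = 0 ∧ c = 0 then β₁ else 0)
        + (if a = 0 ∧ b = 1 ∧ c = 0 then β₂ else 0)
        + (if a = 0 ∧ b = 0 ∧ c = 1 then β₃ else 0) := by
    intro a b c
    have h := congrArg (coeff (mu a b c)) hexp
    rw [coeff_rhs] at h
    simp only [coeff_add, coeff_sub, coeff_C_mul] at h
    rw [termA, termB, termC, termD, termE, termF, termG, termH] at h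
    rw [← h]
    ring
  intro a b c
  rcases lt_or_ge a 0 with ha | ha
  · have e1 : tt g a (b-1) c = 0 := tt_neg g (Or.inl ha)
    have e2 : tt g a b c = 0 := tt_neg g (Or.inl ha)
    have e4 : tt g a (b+1) c = 0 := tt_neg g (Or.inl ha)
    have e5 : tt g (a-2) (b+1) c = 0 := tt_neg g (Or.inl (by omega))
    have hsplit : a = -1 ∨ a < -1 := by omega
    have e3 : β*((a:ℝ)+1) * tt g (a+1) b (c-1) = 0 := by
      rcases hsplit with rfl | h
      · norm_num
      · rw [tt_neg g (Or.inl (by omega))]; ring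
    have e6 : tt g (a-1) b (c+1) = 0 := tt_neg g (Or.inl (by omega))
    rw [e1, e2, e4, e5, e6]
    rw [if_neg (by omega), if_neg (by omega), if_neg (by omega), if_neg (by omega)]
    rw [e3] -- remaining
    ring
  rcases lt_or_ge b 0 with hb | hb
  · have e1 : tt g a (b-1) c = 0 := tt_neg g (Or.inr (Or.inl (by omega)))
    have e2 : tt g a b c = 0 := tt_neg g (Or.inr (Or.inl hb))
    have e3 : tt g (a+1) b (c-1) = 0 := tt_neg g (Or.inr (Or.inl hb))
    have hsplit : b = -1 ∨ b < -1 := by omega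
    have e4 : α*((b:ℝ)+1) * tt g a (b+1) c = 0 := by
      rcases hsplit with rfl | h
      · norm_num
      · rw [tt_neg g (Or.inr (Or.inl (by omega)))]; ring
    have e5 : α*((b:ℝ)+1) * tt g (a-2) (b+1) c = 0 := by
      rcases hsplit with rfl | h
      · norm_num
      · rw [tt_neg g (Or.inr (Or.inl (by omega)))]; ring
    have e6 : tt g (a-1) b (c+1) = 0 := tt_neg g (Or.inr (Or.inl hb))
    rw [e1, e2, e3, e6]
    rw [if_neg (by omega), if_neg (by omega), if_neg (by omega), if_neg (by omega)]
    rw [e4, e5]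
    ring
  rcases lt_or_ge c 0 with hc | hc
  · have e1 : tt g a (b-1) c = 0 := tt_neg g (Or.inr (Or.inr hc))
    have e2 : tt g a b c = 0 := tt_neg g (Or.inr (Or.inr hc))
    have e3 : tt g (a+1) b (c-1) = 0 := tt_neg g (Or.inr (Or.inr (by omega)))
    have e4 : tt g a (b+1) c = 0 := tt_neg g (Or.inr (Or.inr hc))
    have e5 : tt g (a-2) (b+1) c = 0 := tt_neg g (Or.inr (Or.inr hc))
    have hsplit : c = -1 ∨ c < -1 := by omega
    have e6 : ((c:ℝ)+1) * tt g (a-1) b (c+1) = 0 := by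
      rcases hsplit with rfl | h
      · norm_num
      · rw [tt_neg g (Or.inr (Or.inr (by omega)))]; ring
    rw [e1, e2, e3, e4, e5]
    rw [if_neg (by omega), if_neg (by omega), if_neg (by omega), if_neg (by omega)]
    rw [e6]
    ring
  -- nonnegative case
  · obtain ⟨a', rfl⟩ : ∃ a' : ℕ, a = (a' : ℤ) := ⟨a.toNat, (Int.toNat_of_nonneg ha).symm⟩
    obtain ⟨b', rfl⟩ : ∃ b' : ℕ, b = (b' : ℤ) := ⟨b.toNat, (Int.toNat_of_nonneg hb).symm⟩
    obtain ⟨c', rfl⟩ : ∃ c' : ℕ, c = (c' : ℤ) := ⟨c.toNat, (Int.toNat_of_nonneg hc).symm⟩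
    have := hnat a' b' c'
    push_cast at this ⊢
    simp only [Nat.cast_eq_zero, Nat.cast_eq_one]
    linear_combination this

/-- kernel vector of J (even entries) -/
noncomputable def vv (α : ℝ) (B : ℕ) (k : ℕ) : ℝ :=
  α^k * (∏ i ∈ Finset.range k, ((B:ℝ) - 2*i)) / ∏ i ∈ Finset.range k, (2*(i:ℝ) + 2)

/-- kernel vector of J-transpose (even entries) -/
noncomputable def uu (α : ℝ) (B : ℕ) (k : ℕ) : ℝ :=
  (∏ i ∈ Finset.range k, (2*(i:ℝ)+1)) / (α^k * ∏ i ∈ Finset.range k, ((B:ℝ) - (2*i+1)))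

lemma den_pos (k : ℕ) : (0:ℝ) < ∏ i ∈ Finset.range k, (2*(i:ℝ) + 2) := by
  apply Finset.prod_pos; intro i _; positivity

lemma num1_pos (k : ℕ) : (0:ℝ) < ∏ i ∈ Finset.range k, (2*(i:ℝ) + 1) := by
  apply Finset.prod_pos; intro i _; positivity

lemma numB_pos {B k : ℕ} (hk : 2*k ≤ B) : (0:ℝ) < ∏ i ∈ Finset.range k, ((B:ℝ) - 2*i) := by
  apply Finset.prod_pos; intro i hi
  simp only [Finset.mem_range] at hi
  have : (2*(i:ℝ)+2) ≤ (B:ℝ) := by exact_mod_cast Nat.cast_le.mpr (by omega : 2*i+2 ≤ B)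
  linarith

lemma denB_pos {B k : ℕ} (hk : 2*k ≤ B) : (0:ℝ) < ∏ i ∈ Finset.range k, ((B:ℝ) - (2*i+1)) := by
  apply Finset.prod_pos; intro i hi
  simp only [Finset.mem_range] at hi
  have : (2*(i:ℝ)+2) ≤ (B:ℝ) := by exact_mod_cast Nat.cast_le.mpr (by omega : 2*i+2 ≤ B)
  linarith

lemma denB_ne {α : ℝ} {B : ℕ} (hB : B % 2 = 0) (k : ℕ) :
    (∏ i ∈ Finset.range k, ((B:ℝ) - (2*i+1))) ≠ 0 := by
  apply Finset.prod_ne_zero_iff.mpr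
  intro i _
  intro h
  have : (B:ℝ) = 2*i+1 := by linarith
  have : B = 2*i+1 := by exact_mod_cast this
  omega

section ker

variable {α : ℝ} {B : ℕ} {x : ℤ → ℝ}
variable (hα : α ≠ 0)
variable (hrow : ∀ a : ℤ, ((a:ℝ)+1) * x (a+1) = α*((B:ℝ)+1-(a:ℝ)) * x (a-1))
variable (hneg : ∀ a : ℤ, a < 0 → x a = 0)

include hrow hneg in
lemma ker_odd : ∀ k : ℕ, x (2*k+1) = 0 := by
  intro k
  induction k with
  | zero =>
    have h := hrow 0
    rw [hneg (0-1) (by omega)] at h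
    push_cast at h
    simpa using h
  | succ k ih =>
    have h := hrow (2*k+2)
    have e1 : (2*(k:ℤ)+2) - 1 = 2*k+1 := by ring
    have e2 : (2*(k:ℤ)+2) + 1 = 2*(k+1)+1 := by push_cast; ring
    rw [e1, e2, ih] at h
    push_cast at h
    have hne : ((2*(k:ℝ)+2)+1) ≠ 0 := by positivity
    have h2 : ((2*(k:ℝ)+2)+1) * x (2*(k+1)+1) = 0 := by linarith [h]
    rcases mul_eq_zero.mp h2 with h' | h'
    · exact absurd h' hne
    · exact h'

include hrow in
lemma ker_even : ∀ k : ℕ, x (2*k) = x 0 * vv α B k := by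
  intro k
  induction k with
  | zero => simp [vv]
  | succ k ih =>
    have h := hrow (2*k+1)
    have e1 : (2*(k:ℤ)+1) + 1 = 2*((k:ℤ)+1) := by ring
    have e2 : (2*(k:ℤ)+1) - 1 = 2*k := by ring
    rw [e1, e2, ih] at h
    have hgoal : x (2*((k+1:ℕ):ℤ)) = x (2*((k:ℤ)+1)) := by norm_cast
    rw [hgoal]
    have hne : ((2*(k:ℝ)+1)+1) ≠ 0 := by positivity
    apply mul_left_cancel₀ hne
    push_cast at h
    rw [show ((2*(k:ℝ)+1)+1) * x (2*((k:ℤ)+1)) = α*((B:ℝ)+1-(2*(k:ℝ)+1)) * (x 0 * vv α B k)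
      from by linarith [h]]
    rw [vv, vv, Finset.prod_range_succ, Finset.prod_range_succ, pow_succ]
    have hden := (den_pos k).ne'
    have hden2 : (2*(k:ℝ)+2) ≠ 0 := by positivity
    field_simp
    ring
end ker

lemma uu_zero (α : ℝ) (B : ℕ) : uu α B 0 = 1 := by simp [uu]

lemma uu_step {α : ℝ} (hα : α ≠ 0) {B : ℕ} (hB : B % 2 = 0) (k : ℕ) :
    α * ((B:ℝ) - (2*k+1)) * uu α B (k+1) = (2*(k:ℝ)+1) * uu α B k := by
  have h1 := denB_ne (α := α) hB k
  have h2 := denB_ne (α := α) hB (k+1)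
  have h3 : ((B:ℝ) - (2*k+1)) ≠ 0 := by
    intro h
    have : (B:ℝ) = 2*k+1 := by linarith
    have : B = 2*k+1 := by exact_mod_cast this
    omega
  rw [uu, uu, Finset.prod_range_succ (f := fun i => (2*(i:ℝ)+1)),
    Finset.prod_range_succ (f := fun i => ((B:ℝ) - (2*i+1))), pow_succ]
  field_simp

lemma uu_vv_pos {α : ℝ} (hα : α ≠ 0) {B k : ℕ} (hk : 2*k ≤ B) :
    0 < uu α B k * vv α B k := by
  have hD1 := (denB_pos (B := B) (k := k) hk).ne'
  have hD2 := (den_pos k).ne'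
  have hA : α^k ≠ 0 := pow_ne_zero _ hα
  have e : uu α B k * vv α B k
      = ((∏ i ∈ Finset.range k, (2*(i:ℝ)+1)) * (∏ i ∈ Finset.range k, ((B:ℝ) - 2*i)))
        / ((∏ i ∈ Finset.range k, ((B:ℝ) - (2*i+1))) * (∏ i ∈ Finset.range k, (2*(i:ℝ) + 2))) := by
    rw [uu, vv]
    field_simp
  rw [e]
  apply div_pos
  · exact mul_pos (num1_pos k) (numB_pos hk)
  · exact mul_pos (denB_pos hk) (den_pos k)

lemma vv_ne_odd {α : ℝ} (hα : α ≠ 0) {B : ℕ} (hBo : B % 2 = 1) :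
    vv α B ((B+1)/2) ≠ 0 := by
  rw [vv]
  apply div_ne_zero
  · apply mul_ne_zero (pow_ne_zero _ hα)
    apply Finset.prod_ne_zero_iff.mpr
    intro i _ h
    have : (B:ℝ) = 2*i := by linarith
    have : B = 2*i := by exact_mod_cast this
    omega
  · exact (den_pos _).ne'

section ker2
variable {α : ℝ} {B : ℕ} {x : ℤ → ℝ}
variable (hα : α ≠ 0)
variable (hrow : ∀ a : ℤ, ((a:ℝ)+1) * x (a+1) = α*((B:ℝ)+1-(a:ℝ)) * x (a-1))
variable (hneg : ∀ a : ℤ, a < 0 → x a = 0)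

include hrow hneg in
lemma ker_cover (h0 : x 0 = 0) : ∀ a : ℤ, x a = 0 := by
  intro a
  rcases lt_or_ge a 0 with h | h
  · exact hneg a h
  rcases Int.even_or_odd a with ⟨k, hk⟩ | ⟨k, hk⟩
  · obtain ⟨k', rfl⟩ : ∃ k' : ℕ, k = (k' : ℤ) := ⟨k.toNat, by omega⟩
    rw [show a = 2*(k':ℤ) from by omega, ker_even hrow k', h0, zero_mul]
  · obtain ⟨k', rfl⟩ : ∃ k' : ℕ, k = (k' : ℤ) := ⟨k.toNat, by omega⟩
    rw [show a = 2*(k':ℤ)+1 from by omega]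
    exact ker_odd hrow hneg k'

include hα hrow hneg in
lemma ker_zero_of_odd (hBo : B % 2 = 1) (htop : x ((B:ℤ)+1) = 0) : ∀ a : ℤ, x a = 0 := by
  have h0 : x 0 = 0 := by
    have hk := ker_even hrow ((B+1)/2)
    rw [show (2*(((B+1)/2 : ℕ)):ℤ) = (B:ℤ)+1 from by omega] at hk
    rw [htop] at hk
    rcases mul_eq_zero.mp hk.symm with h | h
    · exact h
    · exact absurd h (vv_ne_odd hα hBo)
  exact ker_cover hrow hneg h0
end ker2



section core
variable {α β κ lam β₀ β₁ β₂ β₃ : ℝ} {t : ℤ → ℤ → ℤ → ℝ} {B D : ℕ}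
variable (hα : α ≠ 0)
variable (hm : ∀ a b c : ℤ,
      (a:ℝ) * t a (b-1) c - ((a:ℝ) + κ*(b:ℝ) + lam*(c:ℝ)) * t a b c
        - β*((a:ℝ)+1) * t (a+1) b (c-1)
        + α*((b:ℝ)+1) * t a (b+1) c - α*((b:ℝ)+1) * t (a-2) (b+1) c
        + ((c:ℝ)+1) * t (a-1) b (c+1)
      = rhs β₀ β₁ β₂ β₃ a b c)
variable (hneg : ∀ a b c : ℤ, a < 0 ∨ b < 0 ∨ c < 0 → t a b c = 0)
variable (hB : ∀ a b c : ℤ, (B:ℤ) < b → t a b c = 0)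
variable (hD : ∀ a b c : ℤ, (D:ℤ) < a + b + c → t a b c = 0)
variable (hc1 : ∀ a b c : ℤ, (B:ℤ) < a + b → t a b c = 0)

include hm hneg hB in
/-- CLAIM 1: coefficients vanish when a + b > B. -/
lemma claim1 : ∀ a b c : ℤ, (B:ℤ) < a + b → t a b c = 0 := by
  have main : ∀ k : ℕ, ∀ b : ℤ, (B:ℤ) - k ≤ b → ∀ a c : ℤ, (B:ℤ) < a + b → t a b c = 0 := by
    intro k
    induction k with
    | zero =>
      intro b hb a c hab
      rcases lt_or_ge (B:ℤ) b with h | h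
      · exact hB a b c h
      · have hbB : b = (B:ℤ) := by omega
        subst hbB
        have ha : 1 ≤ a := by omega
        have h1 := hm a ((B:ℤ)+1) c
        rw [rhs_eq_zero (by omega) (by omega) (by omega) (by omega)] at h1
        have z1 : t a ((B:ℤ)+1) c = 0 := hB _ _ _ (by omega)
        have z2 : t (a+1) ((B:ℤ)+1) (c-1) = 0 := hB _ _ _ (by omega)
        have z3 : t a ((B:ℤ)+1+1) c = 0 := hB _ _ _ (by omega)
        have z4 : t (a-2) ((B:ℤ)+1+1) c = 0 := hB _ _ _ (by omega)
        have z5 : t (a-1) ((B:ℤ)+1) (c+1) = 0 := hB _ _ _ (by omega)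
        have hsimp : ((B:ℤ)+1) - 1 = (B:ℤ) := by ring
        rw [hsimp, z1, z2, z3, z4, z5] at h1
        have h2 : (a:ℝ) * t a (B:ℤ) c = 0 := by linarith [h1]
        have ha' : (a:ℝ) ≠ 0 := by
          simp only [ne_eq, Int.cast_eq_zero]; omega
        exact (mul_eq_zero.mp h2).resolve_left ha'
    | succ k ih =>
      intro b hb a c hab
      rcases le_or_gt ((B:ℤ) - k) b with h | h
      · exact ih b h a c hab
      · have hbeq : b = (B:ℤ) - k - 1 := by omega
        rcases lt_or_ge b 0 with hbneg | hbpos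
        · exact hneg _ _ _ (Or.inr (Or.inl hbneg))
        have ha : 1 ≤ a := by omega
        have h1 := hm a (b+1) c
        rw [rhs_eq_zero (by omega) (by omega) (by omega) (by omega)] at h1
        have z1 : t a (b+1) c = 0 := ih _ (by omega) _ _ (by omega)
        have z2 : t (a+1) (b+1) (c-1) = 0 := ih _ (by omega) _ _ (by omega)
        have z3 : t a (b+1+1) c = 0 := ih _ (by omega) _ _ (by omega)
        have z4 : t (a-2) (b+1+1) c = 0 := ih _ (by omega) _ _ (by omega)
        have z5 : t (a-1) (b+1) (c+1) = 0 := ih _ (by omega) _ _ (by omega)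
        have hsimp : (b+1) - 1 = b := by ring
        rw [hsimp, z1, z2, z3, z4, z5] at h1
        have h2 : (a:ℝ) * t a b c = 0 := by linarith [h1]
        have ha' : (a:ℝ) ≠ 0 := by
          simp only [ne_eq, Int.cast_eq_zero]; omega
        exact (mul_eq_zero.mp h2).resolve_left ha'
  intro a b c hab
  rcases lt_or_ge b 0 with hbneg | hbpos
  · exact hneg _ _ _ (Or.inr (Or.inl hbneg))
  · exact main (B+1) b (by omega) a c hab


omit hα hB hD hc1 in
include hm hneg hc1 in
/-- evolution rows on the extreme diagonal -/
lemma Erow (hB1 : 1 ≤ B) : ∀ a c : ℤ,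
    ((c:ℝ)+1) * t a ((B:ℤ)-a) (c+1)
      = -((a:ℝ)+1) * t (a+1) ((B:ℤ)-(a+1)) c + α*((B:ℝ)+1-(a:ℝ)) * t (a-1) ((B:ℤ)-(a-1)) c := by
  intro a c
  have h := hm (a+1) ((B:ℤ)-a) c
  rw [rhs_eq_zero (by omega) (by omega) (by omega) (by omega)] at h
  have z1 : t (a+1) ((B:ℤ)-a) c = 0 := hc1 _ _ _ (by omega)
  have z2 : t (a+1+1) ((B:ℤ)-a) (c-1) = 0 := hc1 _ _ _ (by omega)
  have z3 : t (a+1) ((B:ℤ)-a+1) c = 0 := hc1 _ _ _ (by omega)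
  rw [z1, z2, z3] at h
  have e1 : ((B:ℤ)-a) - 1 = (B:ℤ)-(a+1) := by ring
  have e2 : (a+1) - 2 = a - 1 := by ring
  have e3 : ((B:ℤ)-a) + 1 = (B:ℤ)-(a-1) := by ring
  have e4 : (a+1) - 1 = a := by ring
  rw [e1, e2, e3, e4] at h
  push_cast at h ⊢
  linear_combination h

omit hα hm hB hD hc1 in
include hneg in
lemma Eneg_high : ∀ c : ℤ, ∀ k : ℕ, ((B:ℤ) < 2*k) → t (2*k) ((B:ℤ)-2*k) c = 0 := by
  intro c k hk
  exact hneg _ _ _ (Or.inr (Or.inl (by omega)))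

omit hB hD in
include hα hm hneg hc1 in
/-- the sigma functional kills successive slices (B even) -/
lemma sigma_step (hB1 : 1 ≤ B) (hBe : B % 2 = 0) (c : ℤ) :
    ((c:ℝ)+1) * ∑ k ∈ Finset.range (B/2+1), uu α B k * t (2*(k:ℤ)) ((B:ℤ)-2*k) (c+1) = 0 := by
  set N := B/2 with hN
  have hBN : B = 2*N := by omega
  rw [Finset.mul_sum]
  have hterm : ∀ k : ℕ, ((c:ℝ)+1) * (uu α B k * t (2*(k:ℤ)) ((B:ℤ)-2*k) (c+1))
      = uu α B k * (-((2*(k:ℝ))+1) * t (2*(k:ℤ)+1) ((B:ℤ)-(2*(k:ℤ)+1)) c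
          + α*((B:ℝ)+1-(2*(k:ℝ))) * t (2*(k:ℤ)-1) ((B:ℤ)-(2*(k:ℤ)-1)) c) := by
    intro k
    have h := Erow hm hneg hc1 hB1 (2*(k:ℤ)) c
    push_cast at h ⊢
    rw [mul_left_comm]
    rw [h]
  rw [Finset.sum_congr rfl (fun k _ => hterm k)]
  have hsplit : ∀ k : ℕ, uu α B k * (-((2*(k:ℝ))+1) * t (2*(k:ℤ)+1) ((B:ℤ)-(2*(k:ℤ)+1)) c
          + α*((B:ℝ)+1-(2*(k:ℝ))) * t (2*(k:ℤ)-1) ((B:ℤ)-(2*(k:ℤ)-1)) c)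
      = -(uu α B k * ((2*(k:ℝ))+1) * t (2*(k:ℤ)+1) ((B:ℤ)-(2*(k:ℤ)+1)) c)
        + uu α B k * (α*((B:ℝ)+1-(2*(k:ℝ)))) * t (2*(k:ℤ)-1) ((B:ℤ)-(2*(k:ℤ)-1)) c := by
    intro k; ring
  rw [Finset.sum_congr rfl (fun k _ => hsplit k), Finset.sum_add_distrib]
  -- first sum: peel top; second sum: peel bottom
  rw [Finset.sum_range_succ (f := fun k =>
    -(uu α B k * ((2*(k:ℝ))+1) * t (2*(k:ℤ)+1) ((B:ℤ)-(2*(k:ℤ)+1)) c))]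
  rw [Finset.sum_range_succ' (f := fun k =>
    uu α B k * (α*((B:ℝ)+1-(2*(k:ℝ)))) * t (2*(k:ℤ)-1) ((B:ℤ)-(2*(k:ℤ)-1)) c)]
  have hz1 : t (2*(N:ℤ)+1) ((B:ℤ)-(2*(N:ℤ)+1)) c = 0 :=
    hneg _ _ _ (Or.inr (Or.inl (by omega)))
  have hz2 : t (2*((0:ℕ):ℤ)-1) ((B:ℤ)-(2*((0:ℕ):ℤ)-1)) c = 0 :=
    hneg _ _ _ (Or.inl (by omega))
  rw [hz1, hz2]
  simp only [mul_zero, zero_mul, neg_zero, add_zero]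
  rw [← Finset.sum_add_distrib]
  apply Finset.sum_eq_zero
  intro k hk
  have e1 : (2*((k+1:ℕ):ℤ)-1) = 2*(k:ℤ)+1 := by push_cast; ring
  rw [e1]
  have hstep := uu_step hα hBe k
  have e5 : uu α B (k+1) * (α*((B:ℝ)+1-(2*((k+1:ℕ):ℝ)))) = uu α B k * ((2*(k:ℝ))+1) := by
    push_cast
    rw [show α*((B:ℝ)+1-(2*((k:ℝ)+1))) = α * ((B:ℝ) - (2*k+1)) from by ring]
    rw [← mul_comm (α * ((B:ℝ) - (2*k+1)))]
    rw [hstep]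
    ring
  rw [e5]
  ring

omit hB in
include hα hm hneg hD hc1 in
/-- B odd: the whole extreme slice vanishes -/
lemma Eodd_vanish (hB1 : 1 ≤ B) (hBo : B % 2 = 1) : ∀ c a : ℤ, t a ((B:ℤ)-a) c = 0 := by
  have base : ∀ c : ℤ, (D:ℤ) < c → ∀ a : ℤ, t a ((B:ℤ)-a) c = 0 := by
    intro c hc a
    rcases lt_or_ge a 0 with h | h
    · exact hneg _ _ _ (Or.inl h)
    rcases lt_or_ge ((B:ℤ)-a) 0 with h2 | h2
    · exact hneg _ _ _ (Or.inr (Or.inl h2))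
    exact hD _ _ _ (by omega)
  have main : ∀ m : ℕ, ∀ c : ℤ, (D:ℤ) < c + m → 0 ≤ c → ∀ a : ℤ, t a ((B:ℤ)-a) c = 0 := by
    intro m
    induction m with
    | zero => intro c hc _ a; exact base c (by omega) a
    | succ m ih =>
      intro c hc hc0 a
      rcases lt_or_ge (D:ℤ) (c + m) with h | h
      · exact ih c h hc0 a
      · have hnext : ∀ a' : ℤ, t a' ((B:ℤ)-a') (c+1) = 0 := fun a' =>
          ih (c+1) (by omega) (by omega) a'
        have hrow : ∀ a' : ℤ, ((a':ℝ)+1) * (fun a0 => t a0 ((B:ℤ)-a0) c) (a'+1)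
            = α*((B:ℝ)+1-(a':ℝ)) * (fun a0 => t a0 ((B:ℤ)-a0) c) (a'-1) := by
          intro a'
          have h1 := Erow hm hneg hc1 hB1 a' c
          rw [hnext a'] at h1
          simp only
          linarith [h1]
        have hxneg : ∀ a' : ℤ, a' < 0 → (fun a0 => t a0 ((B:ℤ)-a0) c) a' = 0 := by
          intro a' h'
          exact hneg _ _ _ (Or.inl h')
        have htop : (fun a0 => t a0 ((B:ℤ)-a0) c) ((B:ℤ)+1) = 0 := by
          simp only
          exact hneg _ _ _ (Or.inr (Or.inl (by omega)))
        exact ker_zero_of_odd hα hrow hxneg hBo htop a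
  intro c a
  rcases lt_or_ge c 0 with h | h
  · exact hneg _ _ _ (Or.inr (Or.inr h))
  · exact main (D+1) c (by omega) h a

omit hB in
include hα hm hneg hD hc1 in
/-- B even: the extreme slice vanishes for c ≥ 1 -/
lemma Eeven_vanish (hB1 : 1 ≤ B) (hBe : B % 2 = 0) :
    ∀ c a : ℤ, 1 ≤ c → t a ((B:ℤ)-a) c = 0 := by
  have base : ∀ c : ℤ, (D:ℤ) < c → ∀ a : ℤ, t a ((B:ℤ)-a) c = 0 := by
    intro c hc a
    rcases lt_or_ge a 0 with h | h
    · exact hneg _ _ _ (Or.inl h)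
    rcases lt_or_ge ((B:ℤ)-a) 0 with h2 | h2
    · exact hneg _ _ _ (Or.inr (Or.inl h2))
    exact hD _ _ _ (by omega)
  have main : ∀ m : ℕ, ∀ c : ℤ, (D:ℤ) < c + m → 1 ≤ c → ∀ a : ℤ, t a ((B:ℤ)-a) c = 0 := by
    intro m
    induction m with
    | zero => intro c hc _ a; exact base c (by omega) a
    | succ m ih =>
      intro c hc hc1' a
      rcases lt_or_ge (D:ℤ) (c + m) with h | h
      · exact ih c h hc1' a
      · have hnext : ∀ a' : ℤ, t a' ((B:ℤ)-a') (c+1) = 0 := fun a' =>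
          ih (c+1) (by omega) (by omega) a'
        have hrow : ∀ a' : ℤ, ((a':ℝ)+1) * (fun a0 => t a0 ((B:ℤ)-a0) c) (a'+1)
            = α*((B:ℝ)+1-(a':ℝ)) * (fun a0 => t a0 ((B:ℤ)-a0) c) (a'-1) := by
          intro a'
          have h1 := Erow hm hneg hc1 hB1 a' c
          rw [hnext a'] at h1
          simp only
          linarith [h1]
        have hxneg : ∀ a' : ℤ, a' < 0 → (fun a0 => t a0 ((B:ℤ)-a0) c) a' = 0 := by
          intro a' h'
          exact hneg _ _ _ (Or.inl h')
        -- sigma kills x 0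
        have hsig := sigma_step hα hm hneg hc1 hB1 hBe (c-1)
        rw [show (c-1)+1 = c from by ring] at hsig
        have hcast : ((c-1:ℤ):ℝ)+1 = (c:ℝ) := by push_cast; ring
        rw [hcast] at hsig
        have hcne : (c:ℝ) ≠ 0 := by
          simp only [ne_eq, Int.cast_eq_zero]; omega
        have hsum : ∑ k ∈ Finset.range (B/2+1), uu α B k * t (2*(k:ℤ)) ((B:ℤ)-2*k) c = 0 :=
          by
            rcases mul_eq_zero.mp hsig with h' | h'
            · exact absurd h' hcne
            · exact h'
        have hexp : ∀ k : ℕ, t (2*(k:ℤ)) ((B:ℤ)-2*k) c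
            = t 0 ((B:ℤ)) c * vv α B k := by
          intro k
          have := ker_even (B := B) (x := fun a0 => t a0 ((B:ℤ)-a0) c) hrow k
          simpa using this
        rw [Finset.sum_congr rfl (fun k _ => by rw [hexp k])] at hsum
        have hS : ∑ k ∈ Finset.range (B/2+1), uu α B k * (t 0 ((B:ℤ)) c * vv α B k)
            = t 0 ((B:ℤ)) c * ∑ k ∈ Finset.range (B/2+1), uu α B k * vv α B k := by
          rw [Finset.mul_sum]
          apply Finset.sum_congr rfl
          intro k _; ring
        rw [hS] at hsum
        have hSpos : 0 < ∑ k ∈ Finset.range (B/2+1), uu α B k * vv α B k := by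
          apply Finset.sum_pos
          · intro k hk
            simp only [Finset.mem_range] at hk
            exact uu_vv_pos hα (by omega)
          · exact ⟨0, Finset.mem_range.mpr (by omega)⟩
        have h0 : t 0 ((B:ℤ)) c = 0 := by
          rcases mul_eq_zero.mp hsum with h' | h'
          · exact h'
          · exact absurd h' hSpos.ne'
        have h0' : (fun a0 => t a0 ((B:ℤ)-a0) c) 0 = 0 := by
          simpa using h0
        exact ker_cover hrow hxneg h0' a
  intro c a hc
  exact main (D+1) c (by omega) hc a


set_option maxHeartbeats 1000000 in
include hα hm hneg hB hD hc1 in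
theorem core_final (hwit : 1 ≤ B → ∃ a c : ℤ, t a (B:ℤ) c ≠ 0) :
    ∀ a b c : ℤ, 0 ≤ a → 0 ≤ b → 0 ≤ c → 2 < a + b + c → t a b c = 0 := by
  rcases Nat.eq_zero_or_pos B with hB0 | hB1
  · -- B = 0 : only z-axis coefficients survive
    intro a b c ha hb hc habc
    rcases lt_or_ge (B:ℤ) (a+b) with h | h
    · exact hc1 _ _ _ h
    · have ha0 : a = 0 := by omega
      have hb0 : b = 0 := by omega
      subst ha0; subst hb0
      have hc3 : 3 ≤ c := by omega
      have h1 := hm 1 0 (c-1)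
      rw [rhs_eq_zero (by omega) (by omega) (by omega) (by omega)] at h1
      have z1 : t 1 (0-1) (c-1) = 0 := hneg _ _ _ (Or.inr (Or.inl (by omega)))
      have z2 : t 1 0 (c-1) = 0 := hc1 _ _ _ (by omega)
      have z3 : t (1+1) 0 (c-1-1) = 0 := hc1 _ _ _ (by omega)
      have z4 : t 1 (0+1) (c-1) = 0 := hc1 _ _ _ (by omega)
      have z5 : t (1-2) (0+1) (c-1) = 0 := hneg _ _ _ (Or.inl (by omega))
      rw [z1, z2, z3, z4, z5] at h1
      have e1 : (1:ℤ)-1 = 0 := by ring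
      have e2 : (c-1)+1 = c := by ring
      rw [e1, e2] at h1
      have hcne : ((c-1:ℤ):ℝ)+1 ≠ 0 := by
        push_cast
        intro hcc
        have : (c:ℝ) = 0 := by linarith
        have : c = 0 := by exact_mod_cast this
        omega
      have h2 : ((c-1:ℤ):ℝ)+1 ≠ 0 → t 0 0 c = 0 := by
        intro hne
        have h3 : (((c-1:ℤ):ℝ)+1) * t 0 0 c = 0 := by linarith [h1]
        rcases mul_eq_zero.mp h3 with h' | h'
        · exact absurd h' hne
        · exact h'
      exact h2 hcne
  · -- B ≥ 1
    obtain ⟨aw, cw, hw⟩ := hwit hB1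
    -- the witness must be at a = 0
    have hw0 : t 0 (B:ℤ) cw ≠ 0 := by
      rcases lt_trichotomy aw 0 with h | h | h
      · exact absurd (hneg _ _ _ (Or.inl h)) hw
      · rw [h] at hw; exact hw
      · exact absurd (hc1 _ _ _ (by omega)) hw
    rcases Nat.even_or_odd B with hBe | hBo
    · -- B even
      have hBe' : B % 2 = 0 := Nat.even_iff.mp hBe
      have hEc := Eeven_vanish hα hm hneg hD hc1 hB1 hBe'
      -- rows at c = 0
      have hrow0 : ∀ a' : ℤ, ((a':ℝ)+1) * (fun a0 => t a0 ((B:ℤ)-a0) 0) (a'+1)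
          = α*((B:ℝ)+1-(a':ℝ)) * (fun a0 => t a0 ((B:ℤ)-a0) 0) (a'-1) := by
        intro a'
        have h1 := Erow hm hneg hc1 hB1 a' 0
        rw [hEc (0+1) a' (by omega)] at h1
        simp only
        push_cast at h1 ⊢
        linarith [h1]
      have hxneg : ∀ a' : ℤ, a' < 0 → (fun a0 => t a0 ((B:ℤ)-a0) 0) a' = 0 := by
        intro a' h'; exact hneg _ _ _ (Or.inl h')
      -- cw must be 0 or handled
      have hcw0 : cw = 0 := by
        by_contra hne
        rcases lt_trichotomy cw 0 with h | h | h
        · exact absurd (hneg _ _ _ (Or.inr (Or.inr h))) hw0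
        · exact hne h
        · have := hEc cw 0 (by omega)
          rw [show (B:ℤ)-0 = (B:ℤ) from by ring] at this
          exact absurd this hw0
      subst hcw0
      -- e ≠ 0 : the witness value
      -- now kill e for B ≥ 4
      rcases Nat.lt_or_ge B 3 with hBlt | hBge
      · -- B = 2 endgame
        have hB2 : B = 2 := by omega
        subst hB2
        -- facts
        have hE11 : t 1 1 0 = 0 := by
          have := ker_odd hrow0 hxneg 0
          simpa using this
        have hE11' : ∀ c : ℤ, 0 ≤ c → t 1 1 c = 0 := by
          intro c hc
          rcases eq_or_lt_of_le hc with h | h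
          · rw [← h]; exact hE11
          · have := hEc c 1 (by omega)
            simpa using this
        have hE20' : ∀ c : ℤ, 1 ≤ c → t 2 0 c = 0 := by
          intro c hc
          have := hEc c 2 (by omega)
          simpa using this
        -- F rows
        have hFrow : ∀ a c : ℤ,
            ((c:ℝ)+1) * t a (1-a) (c+1)
              = -((a:ℝ)+1) * t (a+1) (1-(a+1)) c + α*(2-(a:ℝ)) * t (a-1) (1-(a-1)) c
                + ((a:ℝ)+1+κ*(1-(a:ℝ))+lam*(c:ℝ)) * t (a+1) (2-(a+1)) c := by
          intro a c
          have h1 := hm (a+1) (1-a) c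
          rw [rhs_eq_zero (by omega) (by omega) (by omega) (by omega)] at h1
          have z2 : t (a+1+1) (1-a) (c-1) = 0 := hc1 _ _ _ (by omega)
          have z3 : t (a+1) (1-a+1) c = 0 := hc1 _ _ _ (by omega)
          rw [z2, z3] at h1
          have e1 : (1-a) - 1 = 1-(a+1) := by ring
          have e2 : (a+1) - 2 = a - 1 := by ring
          have e3 : (1-a) + 1 = 1-(a-1) := by ring
          have e4 : (a+1) - 1 = a := by ring
          have e5 : (1-a : ℤ) = 2-(a+1) := by ring
          rw [e1, e2, e3, e4] at h1
          rw [show t (a+1) (1-a) c = t (a+1) (2-(a+1)) c from by rw [e5]] at h1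
          push_cast at h1 ⊢
          linear_combination h1
        -- F vanishing for c ≥ 1
        have hFv : ∀ c : ℤ, 1 ≤ c → t 0 1 c = 0 ∧ t 1 0 c = 0 := by
          have base : ∀ c : ℤ, (D:ℤ) < c → t 0 1 c = 0 ∧ t 1 0 c = 0 :=
            fun c hc => ⟨hD _ _ _ (by omega), hD _ _ _ (by omega)⟩
          have main : ∀ m : ℕ, ∀ c : ℤ, (D:ℤ) < c + m → 1 ≤ c → t 0 1 c = 0 ∧ t 1 0 c = 0 := by
            intro m
            induction m with
            | zero => intro c hc _; exact base c (by omega)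
            | succ m ih =>
              intro c hc hc1'
              rcases lt_or_ge (D:ℤ) (c + m) with h | h
              · exact ih c h hc1'
              · have hnext := ih (c+1) (by omega) (by omega)
                constructor
                · -- row a = 1 : α * t 0 1 c = 0
                  have h1 := hFrow 1 c
                  rw [show ((1:ℤ)+1) = 2 from by ring] at h1
                  have w1 : t 2 (1-2) c = 0 := hneg _ _ _ (Or.inr (Or.inl (by omega)))
                  have w2 : t 1 (1-1) (c+1) = 0 := by
                    rw [show (1:ℤ)-1 = 0 from by ring]; exact hnext.2
                  have w3 : t 2 (2-2) c = 0 := by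
                    rw [show (2:ℤ)-2 = 0 from by ring]; exact hE20' c hc1'
                  rw [w1, w2, w3] at h1
                  rw [show (1:ℤ)-(1-1) = 1 from by ring] at h1
                  rw [show (1:ℤ)-1 = 0 from by ring] at h1
                  have h2 : α * t 0 1 c = 0 := by
                    push_cast at h1
                    linarith [h1]
                  rcases mul_eq_zero.mp h2 with h' | h'
                  · exact absurd h' hα
                  · exact h'
                · -- row a = 0 : t 1 0 c = 0
                  have h1 := hFrow 0 c
                  have w1 : t 0 (1-0) (c+1) = 0 := by
                    rw [show (1:ℤ)-0 = 1 from by ring]; exact hnext.1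
                  have w2 : t (0-1) (1-(0-1)) c = 0 := hneg _ _ _ (Or.inl (by omega))
                  have w3 : t (0+1) (2-(0+1)) c = 0 := by
                    rw [show (0:ℤ)+1 = 1 from by ring, show (2:ℤ)-1 = 1 from by ring]
                    exact hE11' c (by omega)
                  rw [w1, w2, w3] at h1
                  rw [show (0:ℤ)+1 = 1 from by ring, show (1:ℤ)-1 = 0 from by ring] at h1
                  have h2 : t 1 0 c = 0 := by
                    push_cast at h1
                    linarith [h1]
                  exact h2
          intro c hc
          exact main (D+1) c (by omega) hc
        -- t 1 0 0 = 0
        have hF10 : t 1 0 0 = 0 := by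
          have h1 := hFrow 0 0
          have w1 : t 0 (1-0) (0+1) = 0 := by
            rw [show (1:ℤ)-0 = 1 from by ring]; exact (hFv 1 (by omega)).1
          have w2 : t (0-1) (1-(0-1)) 0 = 0 := hneg _ _ _ (Or.inl (by omega))
          have w3 : t (0+1) (2-(0+1)) 0 = 0 := by
            rw [show (0:ℤ)+1 = 1 from by ring, show (2:ℤ)-1 = 1 from by ring]
            exact hE11
          rw [w1, w2, w3] at h1
          rw [show (0:ℤ)+1 = 1 from by ring, show (1:ℤ)-1 = 0 from by ring] at h1
          push_cast at h1
          linarith [h1]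
        -- G : t 0 0 c = 0 for c ≥ 3
        have hG : ∀ c : ℤ, 3 ≤ c → t 0 0 c = 0 := by
          intro c hc
          have h1 := hm 1 0 (c-1)
          rw [rhs_eq_zero (by omega) (by omega) (by omega) (by omega)] at h1
          have z1 : t 1 (0-1) (c-1) = 0 := hneg _ _ _ (Or.inr (Or.inl (by omega)))
          have z2 : t 1 0 (c-1) = 0 := (hFv (c-1) (by omega)).2
          have z3 : t (1+1) 0 (c-1-1) = 0 := by
            rw [show (1:ℤ)+1 = 2 from by ring]
            exact hE20' (c-1-1) (by omega)
          have z4 : t 1 (0+1) (c-1) = 0 := by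
            rw [show (0:ℤ)+1 = 1 from by ring]
            exact hE11' (c-1) (by omega)
          have z5 : t (1-2) (0+1) (c-1) = 0 := hneg _ _ _ (Or.inl (by omega))
          rw [z1, z2, z3, z4, z5] at h1
          rw [show (1:ℤ)-1 = 0 from by ring, show (c-1)+1 = c from by ring] at h1
          have hcne : ((c-1:ℤ):ℝ)+1 ≠ 0 := by
            push_cast
            intro hcc
            have : (c:ℝ) = 0 := by linarith
            have : c = 0 := by exact_mod_cast this
            omega
          have h3 : (((c-1:ℤ):ℝ)+1) * t 0 0 c = 0 := by linarith [h1]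
          rcases mul_eq_zero.mp h3 with h' | h'
          · exact absurd h' hcne
          · exact h'
        -- final coverage for B = 2
        intro a b c ha hb hc habc
        rcases lt_or_ge ((2:ℕ):ℤ) (a+b) with h | h
        · exact hc1 _ _ _ h
        rcases eq_or_lt_of_le h with h2 | h2
        · -- a + b = 2, c ≥ 1
          have hc1' : 1 ≤ c := by omega
          have := hEc c a (by omega)
          rw [show ((2:ℕ):ℤ)-a = b from by omega] at this
          exact this
        rcases (by omega : a + b = 1 ∨ a + b = 0) with h3 | h3
        · -- a+b = 1, c ≥ 2
          rcases (by omega : (a = 0 ∧ b = 1) ∨ (a = 1 ∧ b = 0)) with ⟨rfl, rfl⟩ | ⟨rfl, rfl⟩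
          · exact (hFv c (by omega)).1
          · exact (hFv c (by omega)).2
        · -- a+b = 0
          have ha0 : a = 0 := by omega
          have hb0 : b = 0 := by omega
          subst ha0; subst hb0
          exact hG c (by omega)
      · -- B ≥ 3, even, so B ≥ 4 : kill e
        have hBge4 : 4 ≤ B := by omega
        have e0 : t 0 (B:ℤ) 0 = 0 := by
          -- kill1 : κ * B * e = 0  (master at (0,B,0))
          have hk1 := hm 0 (B:ℤ) 0
          rw [rhs_eq_zero (by omega) (by omega) (by omega) (by omega)] at hk1
          have z1 : t (0+1) (B:ℤ) (0-1) = 0 := hneg _ _ _ (Or.inr (Or.inr (by omega)))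
          have z2 : t 0 ((B:ℤ)+1) 0 = 0 := hB _ _ _ (by omega)
          have z3 : t (0-2) ((B:ℤ)+1) 0 = 0 := hneg _ _ _ (Or.inl (by omega))
          have z4 : t (0-1) (B:ℤ) (0+1) = 0 := hneg _ _ _ (Or.inl (by omega))
          rw [z1, z2, z3, z4] at hk1
          -- kill2 : -κ(B-1) t(0,B-1,0) + α B e = 0  (master at (0,B-1,0))
          have hk2 := hm 0 ((B:ℤ)-1) 0
          rw [rhs_eq_zero (by omega) (by omega) (by omega) (by omega)] at hk2
          have y1 : t (0+1) ((B:ℤ)-1) (0-1) = 0 := hneg _ _ _ (Or.inr (Or.inr (by omega)))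
          have y2 : t (0-2) ((B:ℤ)-1+1) 0 = 0 := hneg _ _ _ (Or.inl (by omega))
          have y3 : t (0-1) ((B:ℤ)-1) (0+1) = 0 := hneg _ _ _ (Or.inl (by omega))
          rw [y1, y2, y3] at hk2
          rw [show ((B:ℤ)-1)+1 = (B:ℤ) from by ring] at hk2
          by_cases hκ : κ = 0
          · -- kill2 gives α B e = 0
            rw [hκ] at hk2
            push_cast at hk2
            have h3 : α * ((B:ℕ):ℝ) * t 0 (B:ℤ) 0 = 0 := by linear_combination hk2
            have hBne : ((B:ℕ):ℝ) ≠ 0 := by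
              simp only [ne_eq, Nat.cast_eq_zero]; omega
            rcases mul_eq_zero.mp h3 with h' | h'
            · rcases mul_eq_zero.mp h' with h'' | h''
              · exact absurd h'' hα
              · exact absurd h'' hBne
            · exact h'
          · -- kill1 gives κ B e = 0
            have h3 : κ * ((B:ℕ):ℝ) * t 0 (B:ℤ) 0 = 0 := by
              push_cast at hk1
              linarith [hk1]
            have hBne : ((B:ℕ):ℝ) ≠ 0 := by
              simp only [ne_eq, Nat.cast_eq_zero]; omega
            rcases mul_eq_zero.mp h3 with h' | h'
            · rcases mul_eq_zero.mp h' with h'' | h''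
              · exact absurd h'' hκ
              · exact absurd h'' hBne
            · exact h'
        exact absurd e0 hw0
    · -- B odd : contradiction
      have hBo' : B % 2 = 1 := Nat.odd_iff.mp hBo
      have := Eodd_vanish hα hm hneg hD hc1 hB1 hBo' cw 0
      rw [show (B:ℤ)-0 = (B:ℤ) from by ring] at this
      exact absurd this hw0

end core
end Stmt10

open Stmt10 in
/-- with α ≠ 0, every polynomial solution g of
X g = β₀ + β₁x + β₂y + β₃z has degree at most 2. -/
theorem stmt_10 (α β κ lam β₀ β₁ β₂ β₃ : ℝ) (hα : α ≠ 0)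
    (g : MvPolynomial (Fin 3) ℝ)
    (heq : (X 0 * (X 1 - 1) - C β * X 2) * pderiv 0 g
      + (C α * (1 - X 0 ^ 2) - C κ * X 1) * pderiv 1 g
      + (X 0 - C lam * X 2) * pderiv 2 g
      = C β₀ + C β₁ * X 0 + C β₂ * X 1 + C β₃ * X 2) :
    g.totalDegree ≤ 2 := by
  classical
  have hm : ∀ a b c : ℤ,
      (a:ℝ) * tt g a (b-1) c - ((a:ℝ) + κ*(b:ℝ) + lam*(c:ℝ)) * tt g a b c
        - β*((a:ℝ)+1) * tt g (a+1) b (c-1)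
        + α*((b:ℝ)+1) * tt g a (b+1) c - α*((b:ℝ)+1) * tt g (a-2) (b+1) c
        + ((c:ℝ)+1) * tt g (a-1) b (c+1)
      = rhs β₀ β₁ β₂ β₃ a b c := by
    intro a b c
    rw [rhs]
    exact master g α β κ lam β₀ β₁ β₂ β₃ heq a b c
  have hneg : ∀ a b c : ℤ, a < 0 ∨ b < 0 ∨ c < 0 → tt g a b c = 0 := fun a b c h => tt_neg g h
  set B := degreeOf 1 g with hBdef
  set D := totalDegree g with hDdef
  have hcoe : ∀ m : Fin 3 →₀ ℕ, coeff m g ≠ 0 → m 1 ≤ B ∧ (m.sum fun _ e => e) ≤ D := by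
    intro m hmne
    constructor
    · rw [hBdef, degreeOf_eq_sup]
      exact Finset.le_sup (f := fun m => m 1) (mem_support_iff.mpr hmne)
    · exact le_totalDegree (mem_support_iff.mpr hmne)
  have hB : ∀ a b c : ℤ, (B:ℤ) < b → tt g a b c = 0 := by
    intro a b c h
    rcases lt_or_ge a 0 with h2 | h2
    · exact hneg _ _ _ (Or.inl h2)
    rcases lt_or_ge c 0 with h3 | h3
    · exact hneg _ _ _ (Or.inr (Or.inr h3))
    obtain ⟨a', rfl⟩ : ∃ a' : ℕ, a = (a' : ℤ) := ⟨a.toNat, by omega⟩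
    obtain ⟨b', rfl⟩ : ∃ b' : ℕ, b = (b' : ℤ) := ⟨b.toNat, by omega⟩
    obtain ⟨c', rfl⟩ : ∃ c' : ℕ, c = (c' : ℤ) := ⟨c.toNat, by omega⟩
    rw [tt_nat]
    by_contra hne
    have := (hcoe _ hne).1
    rw [mu_apply1] at this
    omega
  have hD : ∀ a b c : ℤ, (D:ℤ) < a + b + c → tt g a b c = 0 := by
    intro a b c h
    rcases lt_or_ge a 0 with h2 | h2
    · exact hneg _ _ _ (Or.inl h2)
    rcases lt_or_ge b 0 with h3 | h3
    · exact hneg _ _ _ (Or.inr (Or.inl h3))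
    rcases lt_or_ge c 0 with h4 | h4
    · exact hneg _ _ _ (Or.inr (Or.inr h4))
    obtain ⟨a', rfl⟩ : ∃ a' : ℕ, a = (a' : ℤ) := ⟨a.toNat, by omega⟩
    obtain ⟨b', rfl⟩ : ∃ b' : ℕ, b = (b' : ℤ) := ⟨b.toNat, by omega⟩
    obtain ⟨c', rfl⟩ : ∃ c' : ℕ, c = (c' : ℤ) := ⟨c.toNat, by omega⟩
    rw [tt_nat]
    by_contra hne
    have := (hcoe _ hne).2
    rw [mu_sum] at this
    omega
  have hc1 := claim1 hm hneg hB
  have hwit : 1 ≤ B → ∃ a c : ℤ, tt g a (B:ℤ) c ≠ 0 := by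
    intro hB1
    have hsupne : g.support.Nonempty := by
      by_contra hemp
      rw [Finset.not_nonempty_iff_eq_empty] at hemp
      have : B = 0 := by
        rw [hBdef, degreeOf_eq_sup, hemp]
        rfl
      omega
    obtain ⟨m, hmmem, hmsup⟩ := Finset.exists_mem_eq_sup g.support hsupne (fun m => m 1)
    have hmne : coeff m g ≠ 0 := mem_support_iff.mp hmmem
    have hmB : m 1 = B := by rw [hBdef, degreeOf_eq_sup, hmsup]
    refine ⟨(m 0 : ℤ), (m 2 : ℤ), ?_⟩
    rw [show ((B:ℕ):ℤ) = ((m 1 : ℕ):ℤ) from by rw [hmB], tt_nat]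
    rw [← eq_mu m]
    exact hmne
  have hfin := core_final hα hm hneg hB hD hc1 hwit
  show g.support.sup (fun s => s.sum fun _ e => e) ≤ 2
  apply Finset.sup_le
  intro m hmmem
  by_contra hgt
  have h3 : 2 < m 0 + m 1 + m 2 := by
    have : (m.sum fun _ e => e) = m 0 + m 1 + m 2 := by
      conv_lhs => rw [eq_mu m]
      rw [mu_sum]
    omega
  have := hfin (m 0) (m 1) (m 2) (by positivity) (by positivity) (by positivity)
    (by exact_mod_cast h3)
  rw [tt_nat, ← eq_mu m] at this
  exact absurd this (mem_support_iff.mp hmmem)
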